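/- Let alpha' and alphaAbs' be the predicates defined by the same mutually recursive clauses as alpha and alphaAbs, except that the abstraction clause is replaced by: alphaAbs' (qAbs xs x X) (qAbs xs' x' X') iff xs = xs' and for ALL y ∉ {x,x'}, if qFresh xs y X and qFresh xs y X' then alpha' (X[y ∧ x]_xs) (X'[y ∧ x']_xs). Then alpha' coincides with alpha on good quasiterms and alphaAbs' coincides with alphaAbs on good quasiabstractions. -/

import Mathlib

open scoped Classical

universe u

section Binding

variable (var varsort index bindex opsym : Type u)

/-! ### Inputs -/

/-- An `(α,β)`-input: a partial function from `α` to `β`. -/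
abbrev Input (α β : Type u) : Type u := α → Option β

/-- The domain of an input. -/
def idom {α β : Type u} (inp : Input α β) : Set α := {a | inp a ≠ none}

/-- The componentwise lifting of a predicate to inputs. -/
def liftP {α β : Type u} (P : β → Prop) (inp : Input α β) : Prop :=
  ∀ a b, inp a = some b → P b

/-- The componentwise lifting of a function to inputs. -/
def liftF {α β γ : Type u} (f : β → γ) (inp : Input α β) : Input α γ :=
  fun a => (inp a).map f

/-- An input is small if its domain has cardinality smaller than that of `var`. -/
def smallDom {α β : Type u} (inp : Input α β) : Prop :=
  Cardinal.mk (idom inp) < Cardinal.mk var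

/-! ### Quasiterms -/

mutual
/-- Quasiterms: raw terms before quotienting by alpha-equivalence. -/
inductive QTerm : Type u where
  | qVar : varsort → var → QTerm
  | qOp : opsym → (index → Option QTerm) → (bindex → Option QAbs) → QTerm
/-- Quasiabstractions. -/
inductive QAbs : Type u where
  | qAbs : varsort → var → QTerm → QAbs
end

/-- Transposition of two variables. -/
noncomputable def swapVar (z1 z2 x : var) : var :=
  if x = z1 then z2 else if x = z2 then z1 else x

/-- Sort-aware transposition of variables (acts only on variables of varsort `zs`). -/
noncomputable def swapVarS (zs xs : varsort) (z1 z2 x : var) : var :=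
  if xs = zs then swapVar var z1 z2 x else x

variable {var varsort index bindex opsym}

/-- Swapping of the variables `z1`, `z2` at varsort `zs` in a quasiterm
(transposing them everywhere, including binding positions). -/
noncomputable def qSwap (z1 z2 : var) (zs : varsort) :
    QTerm var varsort index bindex opsym → QTerm var varsort index bindex opsym :=
  QTerm.rec (motive_1 := fun _ => QTerm var varsort index bindex opsym)
    (motive_2 := fun _ => QAbs var varsort index bindex opsym)
    (motive_3 := fun _ => Option (QTerm var varsort index bindex opsym))
    (motive_4 := fun _ => Option (QAbs var varsort index bindex opsym))
    (fun xs x => .qVar xs (swapVarS var varsort zs xs z1 z2 x))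
    (fun d _ _ rinp rbinp => .qOp d rinp rbinp)
    (fun xs x _ rX => .qAbs xs (swapVarS var varsort zs xs z1 z2 x) rX)
    none (fun _ r => some r) none (fun _ r => some r)

/-- Swapping of variables in a quasiabstraction. -/
noncomputable def qSwapAbs (z1 z2 : var) (zs : varsort) :
    QAbs var varsort index bindex opsym → QAbs var varsort index bindex opsym
  | .qAbs xs x X => .qAbs xs (swapVarS var varsort zs xs z1 z2 x) (qSwap z1 z2 zs X)

/-! ### Freshness and goodness -/

mutual
/-- `QFresh ys y X`: the variable `y` of varsort `ys` has no free occurrence in `X`. -/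
inductive QFresh : varsort → var → QTerm var varsort index bindex opsym → Prop where
  | qVar : ∀ {ys y xs x}, (ys, y) ≠ (xs, x) → QFresh ys y (.qVar xs x)
  | qOp : ∀ {ys y d inp binp}, (∀ i X, inp i = some X → QFresh ys y X) →
      (∀ j A, binp j = some A → QFreshAbs ys y A) → QFresh ys y (.qOp d inp binp)
/-- Freshness for quasiabstractions. -/
inductive QFreshAbs : varsort → var → QAbs var varsort index bindex opsym → Prop where
  | qAbs_bound : ∀ {xs x X}, QFreshAbs xs x (.qAbs xs x X)
  | qAbs_body : ∀ {ys y xs x X}, QFresh ys y X → QFreshAbs ys y (.qAbs xs x X)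
end

mutual
/-- Good quasiterms: all constructors branch less than `|var|`. -/
inductive QGood : QTerm var varsort index bindex opsym → Prop where
  | qVar : ∀ {xs x}, QGood (.qVar xs x)
  | qOp : ∀ {d inp binp}, (∀ i X, inp i = some X → QGood X) →
      (∀ j A, binp j = some A → QGoodAbs A) →
      smallDom var inp → smallDom var binp → QGood (.qOp d inp binp)
/-- Good quasiabstractions. -/
inductive QGoodAbs : QAbs var varsort index bindex opsym → Prop where
  | qAbs : ∀ {xs x X}, QGood X → QGoodAbs (.qAbs xs x X)
end

/-! ### Alpha-equivalence -/

mutual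
/-- Alpha-equivalence of quasiterms. -/
inductive Alpha : QTerm var varsort index bindex opsym →
    QTerm var varsort index bindex opsym → Prop where
  | qVar : ∀ {xs x}, Alpha (.qVar xs x) (.qVar xs x)
  | qOp : ∀ {d inp binp inp' binp'},
      (∀ i, inp i = none ↔ inp' i = none) →
      (∀ i X X', inp i = some X → inp' i = some X' → Alpha X X') →
      (∀ j, binp j = none ↔ binp' j = none) →
      (∀ j A A', binp j = some A → binp' j = some A' → AlphaAbs A A') →
      Alpha (.qOp d inp binp) (.qOp d inp' binp')
/-- Alpha-equivalence of quasiabstractions (the exists-fresh formulation). -/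
inductive AlphaAbs : QAbs var varsort index bindex opsym →
    QAbs var varsort index bindex opsym → Prop where
  | qAbs : ∀ {xs x x' X X' y}, y ∉ ({x, x'} : Set var) →
      QFresh xs y X → QFresh xs y X' →
      Alpha (qSwap y x xs X) (qSwap y x' xs X') →
      AlphaAbs (.qAbs xs x X) (.qAbs xs x' X')
end

/-! ### Terms and abstractions as quotients -/

variable (var varsort index bindex opsym)

/-- Terms: quasiterms modulo alpha-equivalence. -/
def Term : Type u := Quot (@Alpha var varsort index bindex opsym)

/-- Abstractions: quasiabstractions modulo alpha-equivalence. -/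
def Abstr : Type u := Quot (@AlphaAbs var varsort index bindex opsym)

variable {var varsort index bindex opsym}

/-- The projection from quasiterms to terms. -/
def tmk : QTerm var varsort index bindex opsym → Term var varsort index bindex opsym :=
  Quot.mk _

/-- The projection from quasiabstractions to abstractions. -/
def amk : QAbs var varsort index bindex opsym → Abstr var varsort index bindex opsym :=
  Quot.mk _

/-- A representative of a term. -/
noncomputable def trep (X : Term var varsort index bindex opsym) :
    QTerm var varsort index bindex opsym := Quot.out X

/-- A representative of an abstraction. -/
noncomputable def arep (A : Abstr var varsort index bindex opsym) :
    QAbs var varsort index bindex opsym := Quot.out A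

/-- Good terms. -/
def good (X : Term var varsort index bindex opsym) : Prop := QGood (trep X)

/-- Good abstractions. -/
def goodAbs (A : Abstr var varsort index bindex opsym) : Prop := QGoodAbs (arep A)

/-- The variable-injection constructor on terms. -/
def Var (xs : varsort) (x : var) : Term var varsort index bindex opsym :=
  tmk (.qVar xs x)

/-- The operation constructor on terms. -/
noncomputable def Op (d : opsym) (inp : Input index (Term var varsort index bindex opsym))
    (binp : Input bindex (Abstr var varsort index bindex opsym)) :
    Term var varsort index bindex opsym :=
  tmk (.qOp d (liftF trep inp) (liftF arep binp))

/-- The abstraction constructor. -/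
noncomputable def Abs (xs : varsort) (x : var) (X : Term var varsort index bindex opsym) :
    Abstr var varsort index bindex opsym :=
  amk (.qAbs xs x (trep X))

/-- Freshness on terms. -/
def fresh (ys : varsort) (y : var) (X : Term var varsort index bindex opsym) : Prop :=
  QFresh ys y (trep X)

/-- Freshness on abstractions. -/
def freshAbs (ys : varsort) (y : var) (A : Abstr var varsort index bindex opsym) : Prop :=
  QFreshAbs ys y (arep A)

/-- Swapping on terms. -/
noncomputable def tswap (X : Term var varsort index bindex opsym)
    (z1 z2 : var) (zs : varsort) : Term var varsort index bindex opsym :=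
  tmk (qSwap z1 z2 zs (trep X))

/-! ### Substitution -/

mutual
/-- The graph of capture-avoiding substitution on quasiterms:
`QSubst X Y y ys Z` means that `Z` is a result of substituting `Y` for the free
occurrences of the variable `y` of varsort `ys` in `X` (along a capture-free
representative). -/
inductive QSubst : QTerm var varsort index bindex opsym →
    QTerm var varsort index bindex opsym → var → varsort →
    QTerm var varsort index bindex opsym → Prop where
  | var_eq : ∀ {Y y ys}, QSubst (.qVar ys y) Y y ys Y
  | var_ne : ∀ {Y y ys xs x}, (xs, x) ≠ (ys, y) → QSubst (.qVar xs x) Y y ys (.qVar xs x)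
  | op : ∀ {Y y ys d inp binp inp' binp'},
      (∀ i, inp i = none ↔ inp' i = none) →
      (∀ i X X', inp i = some X → inp' i = some X' → QSubst X Y y ys X') →
      (∀ j, binp j = none ↔ binp' j = none) →
      (∀ j A A', binp j = some A → binp' j = some A' → QSubstAbs A Y y ys A') →
      QSubst (.qOp d inp binp) Y y ys (.qOp d inp' binp')
/-- The graph of capture-avoiding substitution on quasiabstractions. -/
inductive QSubstAbs : QAbs var varsort index bindex opsym →
    QTerm var varsort index bindex opsym → var → varsort →
    QAbs var varsort index bindex opsym → Prop where
  | abs : ∀ {Y y ys xs x X X'}, (xs, x) ≠ (ys, y) → QFresh xs x Y →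
      QSubst X Y y ys X' → QSubstAbs (.qAbs xs x X) Y y ys (.qAbs xs x X')
end

/-- The graph of capture-avoiding substitution on terms. -/
def SubstRel (X Y : Term var varsort index bindex opsym) (y : var) (ys : varsort)
    (Z : Term var varsort index bindex opsym) : Prop :=
  ∃ qX qZ, tmk qX = X ∧ tmk qZ = Z ∧ QSubst qX (trep Y) y ys qZ

/-- Capture-avoiding substitution on terms: `subst X Y y ys` is `X[Y/y]_ys`. -/
noncomputable def subst (X Y : Term var varsort index bindex opsym)
    (y : var) (ys : varsort) : Term var varsort index bindex opsym :=
  if h : ∃ Z, SubstRel X Y y ys Z then h.choose else X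

/-- The graph of capture-avoiding substitution on abstractions. -/
def SubstAbsRel (A : Abstr var varsort index bindex opsym)
    (Y : Term var varsort index bindex opsym) (y : var) (ys : varsort)
    (B : Abstr var varsort index bindex opsym) : Prop :=
  ∃ qA qB, amk qA = A ∧ amk qB = B ∧ QSubstAbs qA (trep Y) y ys qB

/-- Capture-avoiding substitution on abstractions: `substAbs A Y y ys` is `A[Y/y]_ys`. -/
noncomputable def substAbs (A : Abstr var varsort index bindex opsym)
    (Y : Term var varsort index bindex opsym) (y : var) (ys : varsort) :
    Abstr var varsort index bindex opsym :=
  if h : ∃ B, SubstAbsRel A Y y ys B then h.choose else A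

/-! ### Parallel substitution -/

mutual
/-- The graph of capture-avoiding parallel substitution on quasiterms, along an
assignment `ρ : varsort → var → Option qterm`. -/
inductive QPSubst : QTerm var varsort index bindex opsym →
    (varsort → var → Option (QTerm var varsort index bindex opsym)) →
    QTerm var varsort index bindex opsym → Prop where
  | var_some : ∀ {ρ xs x Y}, ρ xs x = some Y → QPSubst (.qVar xs x) ρ Y
  | var_none : ∀ {ρ xs x}, ρ xs x = none → QPSubst (.qVar xs x) ρ (.qVar xs x)
  | op : ∀ {ρ d inp binp inp' binp'},
      (∀ i, inp i = none ↔ inp' i = none) →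
      (∀ i X X', inp i = some X → inp' i = some X' → QPSubst X ρ X') →
      (∀ j, binp j = none ↔ binp' j = none) →
      (∀ j A A', binp j = some A → binp' j = some A' → QPSubstAbs A ρ A') →
      QPSubst (.qOp d inp binp) ρ (.qOp d inp' binp')
/-- The graph of capture-avoiding parallel substitution on quasiabstractions. -/
inductive QPSubstAbs : QAbs var varsort index bindex opsym →
    (varsort → var → Option (QTerm var varsort index bindex opsym)) →
    QAbs var varsort index bindex opsym → Prop where
  | abs : ∀ {ρ xs x X X'}, ρ xs x = none →
      (∀ ys y Y, ρ ys y = some Y → QFresh xs x Y) →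
      QPSubst X ρ X' → QPSubstAbs (.qAbs xs x X) ρ (.qAbs xs x X')
end

/-- Turning a term-valued assignment into a quasiterm-valued one, by picking
representatives. -/
noncomputable def qassign (ρ : varsort → var → Option (Term var varsort index bindex opsym)) :
    varsort → var → Option (QTerm var varsort index bindex opsym) :=
  fun xs x => (ρ xs x).map trep

/-- The graph of parallel substitution on terms. -/
def PSubstRel (X : Term var varsort index bindex opsym)
    (ρ : varsort → var → Option (Term var varsort index bindex opsym))
    (Z : Term var varsort index bindex opsym) : Prop :=
  ∃ qX qZ, tmk qX = X ∧ tmk qZ = Z ∧ QPSubst qX (qassign ρ) qZ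

/-- Capture-avoiding parallel substitution on terms: `psubst X ρ` is `X[ρ]`. -/
noncomputable def psubst (X : Term var varsort index bindex opsym)
    (ρ : varsort → var → Option (Term var varsort index bindex opsym)) :
    Term var varsort index bindex opsym :=
  if h : ∃ Z, PSubstRel X ρ Z then h.choose else X

/-- The graph of parallel substitution on abstractions. -/
def PSubstAbsRel (A : Abstr var varsort index bindex opsym)
    (ρ : varsort → var → Option (Term var varsort index bindex opsym))
    (B : Abstr var varsort index bindex opsym) : Prop :=
  ∃ qA qB, amk qA = A ∧ amk qB = B ∧ QPSubstAbs qA (qassign ρ) qB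

/-- Capture-avoiding parallel substitution on abstractions. -/
noncomputable def psubstAbs (A : Abstr var varsort index bindex opsym)
    (ρ : varsort → var → Option (Term var varsort index bindex opsym)) :
    Abstr var varsort index bindex opsym :=
  if h : ∃ B, PSubstAbsRel A ρ B then h.choose else A

mutual
/-- The variant of alpha-equivalence with the forall-fresh clause on abstractions. -/
inductive Alpha' : QTerm var varsort index bindex opsym → QTerm var varsort index bindex opsym → Prop where
  | qVar : ∀ {xs x}, Alpha' (.qVar xs x) (.qVar xs x)
  | qOp : ∀ {d inp binp inp' binp'},
      (∀ i, inp i = none ↔ inp' i = none) →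
      (∀ i X X', inp i = some X → inp' i = some X' → Alpha' X X') →
      (∀ j, binp j = none ↔ binp' j = none) →
      (∀ j A A', binp j = some A → binp' j = some A' → AlphaAbs' A A') →
      Alpha' (.qOp d inp binp) (.qOp d inp' binp')
/-- The forall-fresh alpha-equivalence of quasiabstractions. -/
inductive AlphaAbs' : QAbs var varsort index bindex opsym → QAbs var varsort index bindex opsym → Prop where
  | qAbs : ∀ {xs x x' X X'},
      (∀ y, y ∉ ({x, x'} : Set var) → QFresh xs y X → QFresh xs y X' →
        Alpha' (qSwap y x xs X) (qSwap y x' xs X')) →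
      AlphaAbs' (.qAbs xs x X) (.qAbs xs x' X')
end


section Aux
variable {var varsort index bindex opsym : Type u}

theorem swapVar_invol (z1 z2 x : var) : swapVar var z1 z2 (swapVar var z1 z2 x) = x := by
  unfold swapVar; split_ifs <;> simp_all

theorem swapVar_inj {z1 z2 x y : var} (h : swapVar var z1 z2 x = swapVar var z1 z2 y) : x = y := by
  have := congrArg (swapVar var z1 z2) h
  rwa [swapVar_invol, swapVar_invol] at this

theorem swapVar_conj (z1 z2 y x v : var) :
    swapVar var z1 z2 (swapVar var y x v)
      = swapVar var (swapVar var z1 z2 y) (swapVar var z1 z2 x) (swapVar var z1 z2 v) := by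
  unfold swapVar; split_ifs <;> simp_all

theorem swapVar_triple {z y x : var} (hzy : z ≠ y) (hzx : z ≠ x) (hyx : y ≠ x) (v : var) :
    swapVar var z y (swapVar var y x v) = swapVar var z x (swapVar var z y v) := by
  unfold swapVar; split_ifs <;> simp_all

theorem swapVar_fresh {z1 z2 v : var} (h1 : v ≠ z1) (h2 : v ≠ z2) :
    swapVar var z1 z2 v = v := by
  unfold swapVar; split_ifs <;> simp_all

theorem swapVarS_invol (zs xs : varsort) (z1 z2 x : var) :
    swapVarS var varsort zs xs z1 z2 (swapVarS var varsort zs xs z1 z2 x) = x := by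
  unfold swapVarS; split_ifs <;> simp [swapVar_invol]

theorem swapVarS_inj {zs xs : varsort} {z1 z2 x y : var}
    (h : swapVarS var varsort zs xs z1 z2 x = swapVarS var varsort zs xs z1 z2 y) : x = y := by
  have := congrArg (swapVarS var varsort zs xs z1 z2) h
  rwa [swapVarS_invol, swapVarS_invol] at this

/-- Pointwise conjugation identity for sorted swaps. -/
theorem swapVarS_conj (zs xs us : varsort) (z1 z2 y x : var) (w : var) :
    swapVarS var varsort xs us (swapVarS var varsort zs xs z1 z2 y)
        (swapVarS var varsort zs xs z1 z2 x) (swapVarS var varsort zs us z1 z2 w)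
      = swapVarS var varsort zs us z1 z2 (swapVarS var varsort xs us y x w) := by
  unfold swapVarS
  split_ifs <;> first
    | rfl
    | (exact (swapVar_conj _ _ _ _ _).symm)
    | simp_all

/-- Unfolding lemma for `qSwap` on `qVar`. -/
theorem qSwap_qVar (z1 z2 : var) (zs xs : varsort) (x : var) :
    qSwap z1 z2 zs (QTerm.qVar xs x : QTerm var varsort index bindex opsym)
      = .qVar xs (swapVarS var varsort zs xs z1 z2 x) := rfl

/-- Unfolding lemma for `qSwap` on `qOp`. -/
theorem qSwap_qOp (z1 z2 : var) (zs : varsort) (d : opsym)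
    (inp : Input index (QTerm var varsort index bindex opsym))
    (binp : Input bindex (QAbs var varsort index bindex opsym)) :
    qSwap z1 z2 zs (QTerm.qOp d inp binp)
      = .qOp d (fun i => (inp i).map (qSwap z1 z2 zs))
          (fun j => (binp j).map (qSwapAbs z1 z2 zs)) := by
  show QTerm.qOp _ _ _ = _
  congr 1
  · funext i; cases inp i <;> rfl
  · funext j; rcases binp j with _ | A
    · rfl
    · cases A; rfl

theorem qSwapAbs_qAbs (z1 z2 : var) (zs xs : varsort) (x : var)
    (X : QTerm var varsort index bindex opsym) :
    qSwapAbs z1 z2 zs (QAbs.qAbs xs x X)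
      = .qAbs xs (swapVarS var varsort zs xs z1 z2 x) (qSwap z1 z2 zs X) := rfl

/-- Mutual structural induction for quasiterms/quasiabstractions. -/
theorem qterm_mutual_ind {P : QTerm var varsort index bindex opsym → Prop}
    {Q : QAbs var varsort index bindex opsym → Prop}
    (hvar : ∀ xs x, P (.qVar xs x))
    (hop : ∀ d inp binp, (∀ i X, inp i = some X → P X) →
      (∀ j A, binp j = some A → Q A) → P (.qOp d inp binp))
    (habs : ∀ xs x X, P X → Q (.qAbs xs x X)) :
    (∀ X, P X) ∧ (∀ A, Q A) := by
  refine ⟨fun X => ?_, fun A => ?_⟩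
  · exact QTerm.rec (motive_1 := fun X => P X) (motive_2 := fun A => Q A)
      (motive_3 := fun o => ∀ X, o = some X → P X)
      (motive_4 := fun o => ∀ A, o = some A → Q A)
      hvar (fun d inp binp h1 h2 => hop d inp binp (fun i X h => h1 i X h) (fun j A h => h2 j A h))
      habs (by simp) (fun X hX Y hY => by cases hY; exact hX)
      (by simp) (fun A hA B hB => by cases hB; exact hA) X
  · exact QAbs.rec (motive_1 := fun X => P X) (motive_2 := fun A => Q A)
      (motive_3 := fun o => ∀ X, o = some X → P X)
      (motive_4 := fun o => ∀ A, o = some A → Q A)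
      hvar (fun d inp binp h1 h2 => hop d inp binp (fun i X h => h1 i X h) (fun j A h => h2 j A h))
      habs (by simp) (fun X hX Y hY => by cases hY; exact hX)
      (by simp) (fun A hA B hB => by cases hB; exact hA) A

end Aux

section Aux2
variable {var varsort index bindex opsym : Type u}

theorem qSwap_invol (z1 z2 : var) (zs : varsort) :
    (∀ X : QTerm var varsort index bindex opsym, qSwap z1 z2 zs (qSwap z1 z2 zs X) = X) ∧
    (∀ A : QAbs var varsort index bindex opsym, qSwapAbs z1 z2 zs (qSwapAbs z1 z2 zs A) = A) := by
  apply qterm_mutual_ind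
  · intro xs x; rw [qSwap_qVar, qSwap_qVar, swapVarS_invol]
  · intro d inp binp h1 h2
    rw [qSwap_qOp, qSwap_qOp]
    congr 1
    · funext i; rcases h : inp i with _ | X
      · rfl
      · simp [h1 i X h]
    · funext j; rcases h : binp j with _ | A
      · rfl
      · simp [h2 j A h]
  · intro xs x X hX
    rw [qSwapAbs_qAbs, qSwapAbs_qAbs, swapVarS_invol, hX]

theorem qSwap_comp_congr {z1 z2 z1' z2' w1 w2 w1' w2' : var} {zs zs' ws ws' : varsort}
    (h : ∀ (us : varsort) (w : var),
      swapVarS var varsort zs us z1 z2 (swapVarS var varsort ws us w1 w2 w)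
        = swapVarS var varsort zs' us z1' z2' (swapVarS var varsort ws' us w1' w2' w)) :
    (∀ X : QTerm var varsort index bindex opsym,
      qSwap z1 z2 zs (qSwap w1 w2 ws X) = qSwap z1' z2' zs' (qSwap w1' w2' ws' X)) ∧
    (∀ A : QAbs var varsort index bindex opsym,
      qSwapAbs z1 z2 zs (qSwapAbs w1 w2 ws A) = qSwapAbs z1' z2' zs' (qSwapAbs w1' w2' ws' A)) := by
  apply qterm_mutual_ind
  · intro xs x; rw [qSwap_qVar, qSwap_qVar, qSwap_qVar, qSwap_qVar, h]
  · intro d inp binp h1 h2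
    rw [qSwap_qOp, qSwap_qOp, qSwap_qOp, qSwap_qOp]
    congr 1
    · funext i; rcases hi : inp i with _ | X
      · rfl
      · simp [h1 i X hi]
    · funext j; rcases hj : binp j with _ | A
      · rfl
      · simp [h2 j A hj]
  · intro xs x X hX
    rw [qSwapAbs_qAbs, qSwapAbs_qAbs, qSwapAbs_qAbs, qSwapAbs_qAbs, hX, h]

/-- Ordinal-valued depth of a quasiterm. -/
noncomputable def qdepth : QTerm var varsort index bindex opsym → Ordinal.{u} :=
  QTerm.rec (motive_1 := fun _ => Ordinal.{u}) (motive_2 := fun _ => Ordinal.{u})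
    (motive_3 := fun _ => Ordinal.{u}) (motive_4 := fun _ => Ordinal.{u})
    (fun _ _ => 0)
    (fun _ _ _ r rb => max (⨆ i, r i) (⨆ j, rb j) + 1)
    (fun _ _ _ r => r + 1) 0 (fun _ r => r) 0 (fun _ r => r)

/-- Ordinal-valued depth of a quasiabstraction. -/
noncomputable def qdepthAbs : QAbs var varsort index bindex opsym → Ordinal.{u} :=
  QAbs.rec (motive_1 := fun _ => Ordinal.{u}) (motive_2 := fun _ => Ordinal.{u})
    (motive_3 := fun _ => Ordinal.{u}) (motive_4 := fun _ => Ordinal.{u})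
    (fun _ _ => 0)
    (fun _ _ _ r rb => max (⨆ i, r i) (⨆ j, rb j) + 1)
    (fun _ _ _ r => r + 1) 0 (fun _ r => r) 0 (fun _ r => r)

theorem qdepthAbs_qAbs (xs : varsort) (x : var) (X : QTerm var varsort index bindex opsym) :
    qdepthAbs (QAbs.qAbs xs x X) = qdepth X + 1 := rfl

theorem qdepth_qOp (d : opsym) (inp : Input index (QTerm var varsort index bindex opsym))
    (binp : Input bindex (QAbs var varsort index bindex opsym)) :
    qdepth (QTerm.qOp d inp binp)
      = max (⨆ i, ((inp i).elim 0 qdepth)) (⨆ j, ((binp j).elim 0 qdepthAbs)) + 1 := by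
  show max _ _ + 1 = _
  congr 2
  · refine iSup_congr fun i => ?_
    rcases inp i with _ | X
    · rfl
    · rfl
  · refine iSup_congr fun j => ?_
    rcases binp j with _ | A
    · rfl
    · cases A; rfl

theorem qdepth_lt_inp {d : opsym} {inp : Input index (QTerm var varsort index bindex opsym)}
    {binp : Input bindex (QAbs var varsort index bindex opsym)} {i : index}
    {X : QTerm var varsort index bindex opsym} (h : inp i = some X) :
    qdepth X < qdepth (QTerm.qOp d inp binp) := by
  rw [qdepth_qOp, Ordinal.add_one_eq_succ, Order.lt_succ_iff]
  refine le_trans ?_ (le_max_left _ _)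
  have := Ordinal.le_iSup (fun i => ((inp i).elim 0 qdepth : Ordinal.{u})) i
  rwa [h] at this

theorem qdepthAbs_lt_binp {d : opsym} {inp : Input index (QTerm var varsort index bindex opsym)}
    {binp : Input bindex (QAbs var varsort index bindex opsym)} {j : bindex}
    {A : QAbs var varsort index bindex opsym} (h : binp j = some A) :
    qdepthAbs A < qdepth (QTerm.qOp d inp binp) := by
  rw [qdepth_qOp, Ordinal.add_one_eq_succ, Order.lt_succ_iff]
  refine le_trans ?_ (le_max_right _ _)
  have := Ordinal.le_iSup (fun j => ((binp j).elim 0 qdepthAbs : Ordinal.{u})) j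
  rwa [h] at this

theorem qdepth_lt_qAbs {xs : varsort} {x : var} {X : QTerm var varsort index bindex opsym} :
    qdepth X < qdepthAbs (QAbs.qAbs xs x X) := by
  rw [qdepthAbs_qAbs, Ordinal.add_one_eq_succ]
  exact Order.lt_succ _

theorem qdepth_qSwap (z1 z2 : var) (zs : varsort) :
    (∀ X : QTerm var varsort index bindex opsym, qdepth (qSwap z1 z2 zs X) = qdepth X) ∧
    (∀ A : QAbs var varsort index bindex opsym, qdepthAbs (qSwapAbs z1 z2 zs A) = qdepthAbs A) := by
  apply qterm_mutual_ind
  · intro xs x; rfl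
  · intro d inp binp h1 h2
    rw [qSwap_qOp, qdepth_qOp, qdepth_qOp]
    congr 2
    · refine iSup_congr fun i => ?_
      rcases h : inp i with _ | X
      · rfl
      · simp [h1 i X h]
    · refine iSup_congr fun j => ?_
      rcases h : binp j with _ | A
      · rfl
      · simp [h2 j A h]
  · intro xs x X hX
    rw [qSwapAbs_qAbs, qdepthAbs_qAbs, qdepthAbs_qAbs, hX]

theorem smallDom_map {α β γ : Type u} {inp : Input α β} (f : β → γ)
    (h : smallDom var inp) : smallDom var (fun a => (inp a).map f) := by
  have : idom (fun a => (inp a).map f) = idom inp := by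
    ext a; simp [idom, Option.map_eq_none_iff]
  unfold smallDom at *
  rwa [this]

theorem qGood_qSwap (z1 z2 : var) (zs : varsort) :
    (∀ X : QTerm var varsort index bindex opsym, QGood X → QGood (qSwap z1 z2 zs X)) ∧
    (∀ A : QAbs var varsort index bindex opsym, QGoodAbs A → QGoodAbs (qSwapAbs z1 z2 zs A)) := by
  apply qterm_mutual_ind
  · intro xs x _; rw [qSwap_qVar]; exact QGood.qVar
  · intro d inp binp h1 h2 hg
    rcases hg with _ | ⟨hg1, hg2, hs1, hs2⟩
    rw [qSwap_qOp]
    refine QGood.qOp ?_ ?_ (smallDom_map _ hs1) (smallDom_map _ hs2)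
    · intro i Y hY
      rcases Option.map_eq_some_iff.1 hY with ⟨X, hX, rfl⟩
      exact h1 i X hX (hg1 i X hX)
    · intro j B hB
      rcases Option.map_eq_some_iff.1 hB with ⟨A, hA, rfl⟩
      exact h2 j A hA (hg2 j A hA)
  · intro xs x X hX hg
    rcases hg with ⟨hg⟩
    rw [qSwapAbs_qAbs]
    exact QGoodAbs.qAbs (hX hg)

end Aux2

section Aux3
variable {var varsort index bindex opsym : Type u}

theorem qFresh_qSwap {z1 z2 : var} {zs ys : varsort} {y : var} :
    (∀ X : QTerm var varsort index bindex opsym, QFresh ys y X →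
      QFresh ys (swapVarS var varsort zs ys z1 z2 y) (qSwap z1 z2 zs X)) ∧
    (∀ A : QAbs var varsort index bindex opsym, QFreshAbs ys y A →
      QFreshAbs ys (swapVarS var varsort zs ys z1 z2 y) (qSwapAbs z1 z2 zs A)) := by
  constructor
  · intro X h
    refine QFresh.rec (motive_1 := fun X _ => QFresh ys (swapVarS var varsort zs ys z1 z2 y) (qSwap z1 z2 zs X))
      (motive_2 := fun A _ => QFreshAbs ys (swapVarS var varsort zs ys z1 z2 y) (qSwapAbs z1 z2 zs A))
      ?_ ?_ ?_ ?_ h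
    · intro xs x hne
      rw [qSwap_qVar]
      refine QFresh.qVar fun heq => ?_
      rcases Prod.mk.injEq .. ▸ heq with ⟨h1, h2⟩
      subst h1
      exact hne (by rw [swapVarS_inj h2])
    · intro d inp binp _ _ ih1 ih2
      rw [qSwap_qOp]
      refine QFresh.qOp ?_ ?_
      · intro i Y hY
        rcases Option.map_eq_some_iff.1 hY with ⟨X', hX', rfl⟩
        exact ih1 i X' hX'
      · intro j B hB
        rcases Option.map_eq_some_iff.1 hB with ⟨A', hA', rfl⟩
        exact ih2 j A' hA'
    · intro X; rw [qSwapAbs_qAbs]; exact QFreshAbs.qAbs_bound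
    · intro xs x X _ ih; rw [qSwapAbs_qAbs]; exact QFreshAbs.qAbs_body ih
  · intro A h
    refine QFreshAbs.rec (motive_1 := fun X _ => QFresh ys (swapVarS var varsort zs ys z1 z2 y) (qSwap z1 z2 zs X))
      (motive_2 := fun A _ => QFreshAbs ys (swapVarS var varsort zs ys z1 z2 y) (qSwapAbs z1 z2 zs A))
      ?_ ?_ ?_ ?_ h
    · intro xs x hne
      rw [qSwap_qVar]
      refine QFresh.qVar fun heq => ?_
      rcases Prod.mk.injEq .. ▸ heq with ⟨h1, h2⟩
      subst h1
      exact hne (by rw [swapVarS_inj h2])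
    · intro d inp binp _ _ ih1 ih2
      rw [qSwap_qOp]
      refine QFresh.qOp ?_ ?_
      · intro i Y hY
        rcases Option.map_eq_some_iff.1 hY with ⟨X', hX', rfl⟩
        exact ih1 i X' hX'
      · intro j B hB
        rcases Option.map_eq_some_iff.1 hB with ⟨A', hA', rfl⟩
        exact ih2 j A' hA'
    · intro X; rw [qSwapAbs_qAbs]; exact QFreshAbs.qAbs_bound
    · intro xs x X _ ih; rw [qSwapAbs_qAbs]; exact QFreshAbs.qAbs_body ih

theorem qFresh_qSwap_iff {z1 z2 : var} {zs ys : varsort} {y : var}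
    {X : QTerm var varsort index bindex opsym} :
    QFresh ys (swapVarS var varsort zs ys z1 z2 y) (qSwap z1 z2 zs X) ↔ QFresh ys y X := by
  constructor
  · intro h
    have := (qFresh_qSwap (z1 := z1) (z2 := z2) (zs := zs)).1 _ h
    rwa [swapVarS_invol, (qSwap_invol z1 z2 zs).1] at this
  · exact fun h => (qFresh_qSwap).1 X h

/-- If a variable is untouched by a swap, freshness is preserved by the swap. -/
theorem qFresh_qSwap_iff' {z1 z2 : var} {zs ys : varsort} {y : var}
    {X : QTerm var varsort index bindex opsym}
    (h : swapVarS var varsort zs ys z1 z2 y = y) :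
    QFresh ys y (qSwap z1 z2 zs X) ↔ QFresh ys y X := by
  conv_lhs => rw [← h]
  exact qFresh_qSwap_iff

/-- Good quasiterms have a small set of non-fresh variables. -/
theorem exists_small_support (hinf : Cardinal.aleph0 ≤ Cardinal.mk var)
    (hreg : (Cardinal.mk var).IsRegular) :
    (∀ X : QTerm var varsort index bindex opsym, QGood X →
      ∃ T : Set var, Cardinal.mk T < Cardinal.mk var ∧ ∀ ys y, y ∉ T → QFresh ys y X) ∧
    (∀ A : QAbs var varsort index bindex opsym, QGoodAbs A →
      ∃ T : Set var, Cardinal.mk T < Cardinal.mk var ∧ ∀ ys y, y ∉ T → QFreshAbs ys y A) := by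
  apply qterm_mutual_ind
  · intro xs x _
    refine ⟨{x}, ?_, fun ys y hy => QFresh.qVar fun heq => hy (by cases heq; rfl)⟩
    rw [Cardinal.mk_singleton]
    exact lt_of_lt_of_le Cardinal.one_lt_aleph0 hinf
  · intro d inp binp h1 h2 hg
    rcases hg with _ | ⟨hg1, hg2, hs1, hs2⟩
    have hF : ∀ i : idom inp, ∃ T : Set var, Cardinal.mk T < Cardinal.mk var ∧
        ∀ ys y, y ∉ T → ∀ X, inp i.1 = some X → QFresh ys y X := by
      rintro ⟨i, hi⟩
      rcases Option.ne_none_iff_exists'.1 hi with ⟨X, hX⟩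
      rcases h1 i X hX (hg1 i X hX) with ⟨T, hT, hfr⟩
      exact ⟨T, hT, fun ys y hy X' hX' => by
        rw [hX] at hX'; cases hX'; exact hfr ys y hy⟩
    have hG : ∀ j : idom binp, ∃ T : Set var, Cardinal.mk T < Cardinal.mk var ∧
        ∀ ys y, y ∉ T → ∀ A, binp j.1 = some A → QFreshAbs ys y A := by
      rintro ⟨j, hj⟩
      rcases Option.ne_none_iff_exists'.1 hj with ⟨A, hA⟩
      rcases h2 j A hA (hg2 j A hA) with ⟨T, hT, hfr⟩
      exact ⟨T, hT, fun ys y hy A' hA' => by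
        rw [hA] at hA'; cases hA'; exact hfr ys y hy⟩
    choose F hFlt hFfr using hF
    choose G hGlt hGfr using hG
    refine ⟨(⋃ i, F i) ∪ ⋃ j, G j, ?_, ?_⟩
    · refine lt_of_le_of_lt (Cardinal.mk_union_le _ _) ?_
      refine Cardinal.add_lt_of_lt hinf ?_ ?_
      · exact lt_of_le_of_lt (Cardinal.mk_iUnion_le_sum_mk)
          (Cardinal.sum_lt_of_isRegular hreg hs1 hFlt)
      · exact lt_of_le_of_lt (Cardinal.mk_iUnion_le_sum_mk)
          (Cardinal.sum_lt_of_isRegular hreg hs2 hGlt)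
    · intro ys y hy
      refine QFresh.qOp ?_ ?_
      · intro i X hX
        have hi : i ∈ idom inp := by simp [idom, hX]
        exact hFfr ⟨i, hi⟩ ys y (fun hmem => hy (Or.inl (Set.mem_iUnion.2 ⟨⟨i, hi⟩, hmem⟩))) X hX
      · intro j A hA
        have hj : j ∈ idom binp := by simp [idom, hA]
        exact hGfr ⟨j, hj⟩ ys y (fun hmem => hy (Or.inr (Set.mem_iUnion.2 ⟨⟨j, hj⟩, hmem⟩))) A hA
  · intro xs x X hX hg
    rcases hg with ⟨hg⟩
    rcases hX hg with ⟨T, hT, hfr⟩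
    exact ⟨T, hT, fun ys y hy => QFreshAbs.qAbs_body (hfr ys y hy)⟩

/-- Pick a variable fresh for two good quasiterms, avoiding a given small set. -/
theorem exists_fresh_var (hinf : Cardinal.aleph0 ≤ Cardinal.mk var)
    (hreg : (Cardinal.mk var).IsRegular)
    {X X' : QTerm var varsort index bindex opsym} (hX : QGood X) (hX' : QGood X')
    (avoid : Set var) (hav : Cardinal.mk avoid < Cardinal.mk var) :
    ∃ y, y ∉ avoid ∧ ∀ ys, QFresh ys y X ∧ QFresh ys y X' := by
  rcases (exists_small_support hinf hreg).1 X hX with ⟨T, hT, hfr⟩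
  rcases (exists_small_support hinf hreg).1 X' hX' with ⟨T', hT', hfr'⟩
  have hS : Cardinal.mk ((T ∪ T') ∪ avoid : Set var) < Cardinal.mk var := by
    refine lt_of_le_of_lt (Cardinal.mk_union_le _ _) (Cardinal.add_lt_of_lt hinf ?_ hav)
    exact lt_of_le_of_lt (Cardinal.mk_union_le _ _) (Cardinal.add_lt_of_lt hinf hT hT')
  have : ∃ y, y ∉ ((T ∪ T') ∪ avoid : Set var) := by
    by_contra hcon
    push_neg at hcon
    have : ((T ∪ T') ∪ avoid : Set var) = Set.univ := Set.eq_univ_iff_forall.2 hcon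
    rw [this, Cardinal.mk_univ] at hS
    exact lt_irrefl _ hS
  rcases this with ⟨y, hy⟩
  exact ⟨y, fun h => hy (Or.inr h),
    fun ys => ⟨hfr ys y fun h => hy (Or.inl (Or.inl h)), hfr' ys y fun h => hy (Or.inl (Or.inr h))⟩⟩

/-- A finite avoidance set is small. -/
theorem finite_small (hinf : Cardinal.aleph0 ≤ Cardinal.mk var) (s : Set var) (hs : s.Finite) :
    Cardinal.mk s < Cardinal.mk var :=
  lt_of_lt_of_le hs.lt_aleph0 hinf

end Aux3

section Aux4
variable {var varsort index bindex opsym : Type u}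

theorem alpha_mutual_ind
    {M1 : QTerm var varsort index bindex opsym → QTerm var varsort index bindex opsym → Prop}
    {M2 : QAbs var varsort index bindex opsym → QAbs var varsort index bindex opsym → Prop}
    (hvar : ∀ xs x, M1 (.qVar xs x) (.qVar xs x))
    (hop : ∀ d inp binp inp' binp', (∀ i, inp i = none ↔ inp' i = none) →
      (∀ i X X', inp i = some X → inp' i = some X' → Alpha X X') →
      (∀ j, binp j = none ↔ binp' j = none) →
      (∀ j A A', binp j = some A → binp' j = some A' → AlphaAbs A A') →
      (∀ i X X', inp i = some X → inp' i = some X' → M1 X X') →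
      (∀ j A A', binp j = some A → binp' j = some A' → M2 A A') →
      M1 (.qOp d inp binp) (.qOp d inp' binp'))
    (habs : ∀ xs x x' X X' y, y ∉ ({x, x'} : Set var) → QFresh xs y X → QFresh xs y X' →
      Alpha (qSwap y x xs X) (qSwap y x' xs X') → M1 (qSwap y x xs X) (qSwap y x' xs X') →
      M2 (.qAbs xs x X) (.qAbs xs x' X')) :
    (∀ X Y, Alpha X Y → M1 X Y) ∧ (∀ A B, AlphaAbs A B → M2 A B) := by
  constructor
  · intro X Y h
    refine Alpha.rec (motive_1 := fun X Y _ => M1 X Y) (motive_2 := fun A B _ => M2 A B)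
      ?_ ?_ ?_ h
    · intro xs x; exact hvar xs x
    · intro d inp binp inp' binp' h1 h2 h3 h4 ih1 ih2
      exact hop d inp binp inp' binp' h1 h2 h3 h4 (fun i X X' a b => ih1 i X X' a b)
        (fun j A A' a b => ih2 j A A' a b)
    · intro xs x x' X X' y hy hf hf' ha ih
      exact habs xs x x' X X' y hy hf hf' ha ih
  · intro A B h
    refine AlphaAbs.rec (motive_1 := fun X Y _ => M1 X Y) (motive_2 := fun A B _ => M2 A B)
      ?_ ?_ ?_ h
    · intro xs x; exact hvar xs x
    · intro d inp binp inp' binp' h1 h2 h3 h4 ih1 ih2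
      exact hop d inp binp inp' binp' h1 h2 h3 h4 (fun i X X' a b => ih1 i X X' a b)
        (fun j A A' a b => ih2 j A A' a b)
    · intro xs x x' X X' y hy hf hf' ha ih
      exact habs xs x x' X X' y hy hf hf' ha ih

theorem alpha_sym :
    (∀ X Y : QTerm var varsort index bindex opsym, Alpha X Y → Alpha Y X) ∧
    (∀ A B : QAbs var varsort index bindex opsym, AlphaAbs A B → AlphaAbs B A) := by
  apply alpha_mutual_ind
  · intro xs x; exact Alpha.qVar
  · intro d inp binp inp' binp' h1 _ h3 _ ih1 ih2
    exact Alpha.qOp (fun i => (h1 i).symm) (fun i X X' a b => ih1 i X' X b a)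
      (fun j => (h3 j).symm) (fun j A A' a b => ih2 j A' A b a)
  · intro xs x x' X X' y hy hf hf' _ ih
    refine AlphaAbs.qAbs (y := y) ?_ hf' hf ih
    simp only [Set.mem_insert_iff, Set.mem_singleton_iff] at hy ⊢
    tauto

theorem swapVarS_same (zs : varsort) (z1 z2 v : var) :
    swapVarS var varsort zs zs z1 z2 v = swapVar var z1 z2 v := by
  unfold swapVarS; rw [if_pos rfl]

theorem swapVar_left (z1 z2 : var) : swapVar var z1 z2 z1 = z2 := by
  unfold swapVar; rw [if_pos rfl]

theorem swapVarS_id {zs ys : varsort} {z1 z2 y : var}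
    (h1 : (ys, y) ≠ (zs, z1)) (h2 : (ys, y) ≠ (zs, z2)) :
    swapVarS var varsort zs ys z1 z2 y = y := by
  simp only [ne_eq, Prod.mk.injEq, not_and] at h1 h2
  unfold swapVarS swapVar
  split_ifs <;> simp_all

theorem alpha_qSwap (z1 z2 : var) (zs : varsort) :
    (∀ X Y : QTerm var varsort index bindex opsym, Alpha X Y →
      Alpha (qSwap z1 z2 zs X) (qSwap z1 z2 zs Y)) ∧
    (∀ A B : QAbs var varsort index bindex opsym, AlphaAbs A B →
      AlphaAbs (qSwapAbs z1 z2 zs A) (qSwapAbs z1 z2 zs B)) := by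
  apply alpha_mutual_ind
  · intro xs x; rw [qSwap_qVar]; exact Alpha.qVar
  · intro d inp binp inp' binp' h1 _ h3 _ ih1 ih2
    rw [qSwap_qOp, qSwap_qOp]
    refine Alpha.qOp ?_ ?_ ?_ ?_
    · intro i; simp only [Option.map_eq_none_iff]; exact h1 i
    · intro i Y Y' hY hY'
      rcases Option.map_eq_some_iff.1 hY with ⟨X, hX, rfl⟩
      rcases Option.map_eq_some_iff.1 hY' with ⟨X', hX', rfl⟩
      exact ih1 i X X' hX hX'
    · intro j; simp only [Option.map_eq_none_iff]; exact h3 j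
    · intro j B B' hB hB'
      rcases Option.map_eq_some_iff.1 hB with ⟨A, hA, rfl⟩
      rcases Option.map_eq_some_iff.1 hB' with ⟨A', hA', rfl⟩
      exact ih2 j A A' hA hA'
  · intro xs x x' X X' y hy hf hf' _ ih
    rw [qSwapAbs_qAbs, qSwapAbs_qAbs]
    refine AlphaAbs.qAbs (y := swapVarS var varsort zs xs z1 z2 y) ?_
      (qFresh_qSwap.1 X hf) (qFresh_qSwap.1 X' hf') ?_
    · simp only [Set.mem_insert_iff, Set.mem_singleton_iff] at hy ⊢
      push_neg at hy ⊢
      exact ⟨fun h => hy.1 (swapVarS_inj h), fun h => hy.2 (swapVarS_inj h)⟩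
    · rw [(qSwap_comp_congr (fun us w => swapVarS_conj zs xs us z1 z2 y x w)).1 X,
          (qSwap_comp_congr (fun us w => swapVarS_conj zs xs us z1 z2 y x' w)).1 X']
      exact ih

theorem alpha_fresh :
    (∀ X Y : QTerm var varsort index bindex opsym, Alpha X Y →
      ∀ ys y, QFresh ys y X → QFresh ys y Y) ∧
    (∀ A B : QAbs var varsort index bindex opsym, AlphaAbs A B →
      ∀ ys y, QFreshAbs ys y A → QFreshAbs ys y B) := by
  apply alpha_mutual_ind
  · intro xs x ys y h; exact h
  · intro d inp binp inp' binp' h1 _ h3 _ ih1 ih2 ys y hf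
    rcases hf with _ | ⟨hfi, hfb⟩
    refine QFresh.qOp ?_ ?_
    · intro i X' hX'
      have : inp i ≠ none := fun h => by rw [(h1 i).1 h] at hX'; cases hX'
      rcases Option.ne_none_iff_exists'.1 this with ⟨X, hX⟩
      exact ih1 i X X' hX hX' ys y (hfi i X hX)
    · intro j A' hA'
      have : binp j ≠ none := fun h => by rw [(h3 j).1 h] at hA'; cases hA'
      rcases Option.ne_none_iff_exists'.1 this with ⟨A, hA⟩
      exact ih2 j A A' hA hA' ys y (hfb j A hA)
  · intro xs x x' X X' w hw hfw hfw' _ ih ys y hf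
    simp only [Set.mem_insert_iff, Set.mem_singleton_iff] at hw
    push_neg at hw
    -- key: x is fresh in `qSwap w x xs X`
    have hkey : QFresh xs x (qSwap w x xs X) := by
      have := (qFresh_qSwap (zs := xs) (z1 := w) (z2 := x)).1 X hfw
      rwa [swapVarS_same, swapVar_left] at this
    have hkey' : QFresh xs x (qSwap w x' xs X') := ih xs x hkey
    -- if x ∉ {w, x'}, then x is fresh in X'
    have hxX' : x ≠ x' → QFresh xs x X' := fun hxx' => by
      rw [← qFresh_qSwap_iff' (zs := xs) (z1 := w) (z2 := x')
        (swapVarS_id (by simpa [Prod.ext_iff, eq_comm] using hw.1) (by simp [Prod.ext_iff, hxx']))]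
      exact hkey'
    rcases hf with _ | hfX
    · -- bound case: y = x, ys = xs
      by_cases hxx' : x = x'
      · subst hxx'; exact QFreshAbs.qAbs_bound
      · exact QFreshAbs.qAbs_body (hxX' hxx')
    · -- body case: QFresh ys y X
      by_cases hb : (ys, y) = (xs, x')
      · obtain ⟨h1, h2⟩ := Prod.mk.injEq .. ▸ hb
        rw [h1, h2]
        exact QFreshAbs.qAbs_bound
      by_cases hbw : (ys, y) = (xs, w)
      · obtain ⟨h1, h2⟩ := Prod.mk.injEq .. ▸ hbw
        rw [h1, h2]
        exact QFreshAbs.qAbs_body hfw'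
      by_cases hbx : (ys, y) = (xs, x)
      · obtain ⟨h1, h2⟩ := Prod.mk.injEq .. ▸ hbx
        by_cases hxx' : x = x'
        · exact absurd (by rw [h1, h2, hxx']) hb
        · rw [h1, h2]
          exact QFreshAbs.qAbs_body (hxX' hxx')
      · -- generic case
        have hy1 : QFresh ys y (qSwap w x xs X) := by
          rw [qFresh_qSwap_iff' (swapVarS_id hbw hbx)]
          exact hfX
        have hy2 : QFresh ys y (qSwap w x' xs X') := ih ys y hy1
        rw [qFresh_qSwap_iff' (swapVarS_id hbw hb)] at hy2
        exact QFreshAbs.qAbs_body hy2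

end Aux4

section Aux5
variable {var varsort index bindex opsym : Type u}

theorem exists_not_mem_of_small {s : Set var} (hs : Cardinal.mk s < Cardinal.mk var) :
    ∃ y : var, y ∉ s := by
  by_contra hcon
  push_neg at hcon
  rw [Set.eq_univ_iff_forall.2 hcon, Cardinal.mk_univ] at hs
  exact lt_irrefl _ hs

theorem qFresh_swap_binder {xs : varsort} {y x : var}
    {X : QTerm var varsort index bindex opsym}
    (h : QFresh xs y X) : QFresh xs x (qSwap y x xs X) := by
  have := (qFresh_qSwap (zs := xs) (z1 := y) (z2 := x)).1 X h
  rwa [swapVarS_same, swapVar_left] at this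

/-- Swapping two fresh variables yields an alpha-equivalent quasiterm. -/
theorem alpha_swap_fresh (hinf : Cardinal.aleph0 ≤ Cardinal.mk var)
    (hreg : (Cardinal.mk var).IsRegular) : ∀ n : Ordinal.{u},
    (∀ X : QTerm var varsort index bindex opsym, qdepth X < n → QGood X →
      ∀ z1 z2 zs, QFresh zs z1 X → QFresh zs z2 X → Alpha (qSwap z1 z2 zs X) X) ∧
    (∀ A : QAbs var varsort index bindex opsym, qdepthAbs A < n → QGoodAbs A →
      ∀ z1 z2 zs, QFreshAbs zs z1 A → QFreshAbs zs z2 A → AlphaAbs (qSwapAbs z1 z2 zs A) A) := by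
  intro n
  induction n using Ordinal.induction with
  | h n IH =>
  constructor
  · intro X hd hg z1 z2 zs hf1 hf2
    cases X with
    | qVar xs x =>
      cases hf1 with | qVar hne1 =>
      cases hf2 with | qVar hne2 =>
      rw [qSwap_qVar, swapVarS_id (fun h => hne1 h.symm) (fun h => hne2 h.symm)]
      exact Alpha.qVar
    | qOp d inp binp =>
      rcases hg with _ | ⟨hg1, hg2, _, _⟩
      cases hf1 with | qOp hfi1 hfb1 =>
      cases hf2 with | qOp hfi2 hfb2 =>
      rw [qSwap_qOp]
      refine Alpha.qOp ?_ ?_ ?_ ?_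
      · intro i; simp only [Option.map_eq_none_iff]
      · intro i Y Y' hY hY'
        rcases Option.map_eq_some_iff.1 hY with ⟨X, hX, rfl⟩
        rw [hX] at hY'; injection hY' with hE; subst hE
        exact (IH _ hd).1 X (qdepth_lt_inp hX) (hg1 _ _ hX) z1 z2 zs
          (hfi1 _ _ hX) (hfi2 _ _ hX)
      · intro j; simp only [Option.map_eq_none_iff]
      · intro j B B' hB hB'
        rcases Option.map_eq_some_iff.1 hB with ⟨A, hA, rfl⟩
        rw [hA] at hB'; injection hB' with hE; subst hE
        exact (IH _ hd).2 A (qdepthAbs_lt_binp hA) (hg2 _ _ hA) z1 z2 zs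
          (hfb1 _ _ hA) (hfb2 _ _ hA)
  · intro A hd hg z1 z2 zs hf1 hf2
    cases A with
    | qAbs xs x X =>
      rcases hg with ⟨hgX⟩
      rw [qSwapAbs_qAbs]
      -- pick a fresh variable avoiding everything in sight
      obtain ⟨y, hyav, hyfr⟩ := exists_fresh_var hinf hreg
        ((qGood_qSwap z1 z2 zs).1 X hgX) hgX
        ({swapVarS var varsort zs xs z1 z2 x, x, z1, z2} : Set var)
        (finite_small hinf _ (Set.toFinite _))
      simp only [Set.mem_insert_iff, Set.mem_singleton_iff] at hyav
      push_neg at hyav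
      obtain ⟨hy1, hy2, hy3, hy4⟩ := hyav
      have hyeq : swapVarS var varsort zs xs z1 z2 y = y :=
        swapVarS_id (fun h => hy3 (congrArg Prod.snd h)) (fun h => hy4 (congrArg Prod.snd h))
      refine AlphaAbs.qAbs (y := y) ?_ (hyfr xs).1 (hyfr xs).2 ?_
      · simp only [Set.mem_insert_iff, Set.mem_singleton_iff]
        push_neg
        exact ⟨hy1, hy2⟩
      -- rewrite the left side using the conjugation identity
      have e1 : qSwap y (swapVarS var varsort zs xs z1 z2 x) xs (qSwap z1 z2 zs X)
          = qSwap z1 z2 zs (qSwap y x xs X) := by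
        refine (qSwap_comp_congr fun us w => ?_).1 X
        conv_lhs => rw [← hyeq]
        exact swapVarS_conj zs xs us z1 z2 y x w
      rw [e1]
      -- freshness of z1, z2 in `qSwap y x xs X`
      have fresh_body : ∀ z, QFreshAbs zs z (QAbs.qAbs xs x X) → z ≠ y →
          QFresh zs z (qSwap y x xs X) := by
        intro z hfz hzy
        by_cases hb : (zs, z) = (xs, x)
        · obtain ⟨e1', e2'⟩ := Prod.mk.injEq .. ▸ hb
          rw [e1', e2']
          exact qFresh_swap_binder (hyfr xs).2
        · rcases hfz with _ | hfz'
          · exact absurd rfl hb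
          · rw [qFresh_qSwap_iff' (swapVarS_id (fun h => hzy (congrArg Prod.snd h)) hb)]
            exact hfz'
      have hgood : QGood (qSwap y x xs X) := (qGood_qSwap y x xs).1 X hgX
      have := (IH _ hd).1 (qSwap y x xs X)
        (by rw [(qdepth_qSwap y x xs).1 X]; exact qdepth_lt_qAbs) hgood z1 z2 zs
        (fresh_body z1 hf1 (fun h => hy3 h.symm)) (fresh_body z2 hf2 (fun h => hy4 h.symm))
      exact this

/-- Alpha-equivalent quasiterms have the same depth. -/
theorem alpha_qdepth :
    (∀ X Y : QTerm var varsort index bindex opsym, Alpha X Y → qdepth X = qdepth Y) ∧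
    (∀ A B : QAbs var varsort index bindex opsym, AlphaAbs A B → qdepthAbs A = qdepthAbs B) := by
  apply alpha_mutual_ind
  · intro xs x; rfl
  · intro d inp binp inp' binp' h1 _ h3 _ ih1 ih2
    rw [qdepth_qOp, qdepth_qOp]
    congr 2
    · refine iSup_congr fun i => ?_
      rcases hX : inp i with _ | X
      · rw [(h1 i).1 hX]
      · have : inp' i ≠ none := fun h => by rw [(h1 i).2 h] at hX; cases hX
        rcases Option.ne_none_iff_exists'.1 this with ⟨X', hX'⟩
        rw [hX']
        exact ih1 i X X' hX hX'
    · refine iSup_congr fun j => ?_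
      rcases hA : binp j with _ | A
      · rw [(h3 j).1 hA]
      · have : binp' j ≠ none := fun h => by rw [(h3 j).2 h] at hA; cases hA
        rcases Option.ne_none_iff_exists'.1 this with ⟨A', hA'⟩
        rw [hA']
        exact ih2 j A A' hA hA'
  · intro xs x x' X X' y _ _ _ _ ih
    rw [qdepthAbs_qAbs, qdepthAbs_qAbs]
    rw [(qdepth_qSwap y x xs).1 X, (qdepth_qSwap y x' xs).1 X'] at ih
    rw [ih]

/-- Transitivity of alpha, bundled with the key lemma: alpha-equivalence of
abstractions yields alpha of the bodies swapped at any common fresh variable. -/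
theorem alpha_trans_key (hinf : Cardinal.aleph0 ≤ Cardinal.mk var)
    (hreg : (Cardinal.mk var).IsRegular) : ∀ n : Ordinal.{u},
    (∀ X : QTerm var varsort index bindex opsym, qdepth X < n → ∀ Y Z,
      QGood X → QGood Y → QGood Z → Alpha X Y → Alpha Y Z → Alpha X Z) ∧
    (∀ X : QTerm var varsort index bindex opsym, qdepth X < n →
      ∀ (xs : varsort) (x x' : var) (X' : QTerm var varsort index bindex opsym),
      QGood X → QGood X' → AlphaAbs (.qAbs xs x X) (.qAbs xs x' X') →
      ∀ z, z ∉ ({x, x'} : Set var) → QFresh xs z X → QFresh xs z X' →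
        Alpha (qSwap z x xs X) (qSwap z x' xs X')) ∧
    (∀ A : QAbs var varsort index bindex opsym, qdepthAbs A < n → ∀ B C,
      QGoodAbs A → QGoodAbs B → QGoodAbs C → AlphaAbs A B → AlphaAbs B C → AlphaAbs A C) := by
  intro n
  induction n using Ordinal.induction with
  | h n IH =>
  -- (a) transitivity on terms
  have trans_tm : ∀ X : QTerm var varsort index bindex opsym, qdepth X < n → ∀ Y Z,
      QGood X → QGood Y → QGood Z → Alpha X Y → Alpha Y Z → Alpha X Z := by
    intro X hd Y Z hgX hgY hgZ h1 h2
    rcases h1 with _ | @⟨d, inp1, binp1, inp2, binp2, hn1, hc1, hm1, hcb1⟩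
    · exact h2
    rcases h2 with _ | @⟨_, _, _, inp3, binp3, hn2, hc2, hm2, hcb2⟩
    rcases hgX with _ | ⟨hgX1, hgX2, _, _⟩
    rcases hgY with _ | ⟨hgY1, hgY2, _, _⟩
    rcases hgZ with _ | ⟨hgZ1, hgZ2, _, _⟩
    refine Alpha.qOp (fun i => (hn1 i).trans (hn2 i)) ?_
      (fun j => (hm1 j).trans (hm2 j)) ?_
    · intro i X1 Z1 hX1 hZ1
      have hne : inp2 i ≠ none := fun h => by rw [(hn1 i).2 h] at hX1; cases hX1
      obtain ⟨Y1, hY1⟩ := Option.ne_none_iff_exists'.1 hne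
      exact (IH _ hd).1 X1 (qdepth_lt_inp hX1) Y1 Z1 (hgX1 _ _ hX1) (hgY1 _ _ hY1)
        (hgZ1 _ _ hZ1) (hc1 i _ _ hX1 hY1) (hc2 i _ _ hY1 hZ1)
    · intro j A1 C1 hA1 hC1
      have hne : binp2 j ≠ none := fun h => by rw [(hm1 j).2 h] at hA1; cases hA1
      obtain ⟨B1, hB1⟩ := Option.ne_none_iff_exists'.1 hne
      exact (IH _ hd).2.2 A1 (qdepthAbs_lt_binp hA1) B1 C1 (hgX2 _ _ hA1) (hgY2 _ _ hB1)
        (hgZ2 _ _ hC1) (hcb1 j _ _ hA1 hB1) (hcb2 j _ _ hB1 hC1)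
  -- (b) the key lemma
  have key : ∀ X : QTerm var varsort index bindex opsym, qdepth X < n →
      ∀ (xs : varsort) (x x' : var) (X' : QTerm var varsort index bindex opsym),
      QGood X → QGood X' → AlphaAbs (.qAbs xs x X) (.qAbs xs x' X') →
      ∀ z, z ∉ ({x, x'} : Set var) → QFresh xs z X → QFresh xs z X' →
        Alpha (qSwap z x xs X) (qSwap z x' xs X') := by
    intro X hd xs x x' X' hgX hgX' hal z hz hfz hfz'
    rcases hal with @⟨_, _, _, _, _, y, hy, hfy, hfy', hsw⟩
    by_cases hzy : z = y
    · subst hzy; exact hsw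
    simp only [Set.mem_insert_iff, Set.mem_singleton_iff] at hz hy
    push_neg at hz hy
    obtain ⟨hzx, hzx'⟩ := hz
    obtain ⟨hyx, hyx'⟩ := hy
    have e1 : qSwap z y xs (qSwap y x xs X) = qSwap z x xs (qSwap z y xs X) := by
      refine (qSwap_comp_congr fun us w => ?_).1 X
      unfold swapVarS
      split_ifs
      · exact swapVar_triple hzy hzx hyx w
      · rfl
    have e1' : qSwap z y xs (qSwap y x' xs X') = qSwap z x' xs (qSwap z y xs X') := by
      refine (qSwap_comp_congr fun us w => ?_).1 X'
      unfold swapVarS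
      split_ifs
      · exact swapVar_triple hzy hzx' hyx' w
      · rfl
    have hdd : qdepth X < qdepth X + 1 := by
      rw [Ordinal.add_one_eq_succ]; exact Order.lt_succ _
    have a1 : Alpha (qSwap z y xs X) X :=
      (alpha_swap_fresh hinf hreg (qdepth X + 1)).1 X hdd hgX z y xs hfz hfy
    have a1' : Alpha (qSwap z y xs X') X' :=
      (alpha_swap_fresh hinf hreg (qdepth X' + 1)).1 X'
        (by rw [Ordinal.add_one_eq_succ]; exact Order.lt_succ _) hgX' z y xs hfz' hfy'
    have a2 : Alpha (qSwap z x xs (qSwap z y xs X)) (qSwap z x xs X) :=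
      (alpha_qSwap z x xs).1 _ _ a1
    have a2' : Alpha (qSwap z x' xs (qSwap z y xs X')) (qSwap z x' xs X') :=
      (alpha_qSwap z x' xs).1 _ _ a1'
    have a3 := (alpha_qSwap z y xs).1 _ _ hsw
    rw [e1, e1'] at a3
    have g0 : QGood (qSwap z x xs X) := (qGood_qSwap z x xs).1 X hgX
    have g1 : QGood (qSwap z x xs (qSwap z y xs X)) :=
      (qGood_qSwap z x xs).1 _ ((qGood_qSwap z y xs).1 X hgX)
    have g2 : QGood (qSwap z x' xs (qSwap z y xs X')) :=
      (qGood_qSwap z x' xs).1 _ ((qGood_qSwap z y xs).1 X' hgX')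
    have g3 : QGood (qSwap z x' xs X') := (qGood_qSwap z x' xs).1 X' hgX'
    have hdep : qdepth (qSwap z x xs X) < n := by
      rw [(qdepth_qSwap z x xs).1 X]; exact hd
    have t1 : Alpha (qSwap z x xs X) (qSwap z x' xs (qSwap z y xs X')) :=
      trans_tm _ hdep _ _ g0 g1 g2 (alpha_sym.1 _ _ a2) a3
    exact trans_tm _ hdep _ _ g0 g2 g3 t1 a2'
  -- (c) transitivity on abstractions
  have trans_abs : ∀ A : QAbs var varsort index bindex opsym, qdepthAbs A < n → ∀ B C,
      QGoodAbs A → QGoodAbs B → QGoodAbs C → AlphaAbs A B → AlphaAbs B C → AlphaAbs A C := by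
    intro A hd B C hgA hgB hgC h1 h2
    rcases h1 with @⟨xs, x, x', X, X', y, hy, hfy, hfy', hsw⟩
    rcases h2 with @⟨_, _, x'', _, X'', y', hy', hf'y, hf'y', hsw'⟩
    rcases hgA with ⟨hgX⟩
    rcases hgB with ⟨hgX'⟩
    rcases hgC with ⟨hgX''⟩
    obtain ⟨T'', hT'', hfrT''⟩ := (exists_small_support hinf hreg).1 X'' hgX''
    obtain ⟨z, hzav, hzfr⟩ := exists_fresh_var hinf hreg hgX hgX'
      (T'' ∪ {x, x', x''})
      (lt_of_le_of_lt (Cardinal.mk_union_le _ _)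
        (Cardinal.add_lt_of_lt hinf hT'' (finite_small hinf _ (Set.toFinite _))))
    have hzT : z ∉ T'' := fun h => hzav (Or.inl h)
    have hzx : z ≠ x := fun h => hzav (Or.inr (Or.inl h))
    have hzx' : z ≠ x' := fun h => hzav (Or.inr (Or.inr (Or.inl h)))
    have hzx'' : z ≠ x'' := fun h => hzav (Or.inr (Or.inr (Or.inr h)))
    have hfz'' : ∀ ys, QFresh ys z X'' := fun ys => hfrT'' ys z hzT
    have hdX : qdepth X < n := lt_trans qdepth_lt_qAbs hd
    have hXX' : qdepth X = qdepth X' := by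
      have := alpha_qdepth.1 _ _ (key X hdX xs x x' X' hgX hgX'
        (AlphaAbs.qAbs hy hfy hfy' hsw) z (by simp [hzx, hzx']) (hzfr xs).1 (hzfr xs).2)
      rwa [(qdepth_qSwap z x xs).1 X, (qdepth_qSwap z x' xs).1 X'] at this
    have hdX' : qdepth X' < n := hXX' ▸ hdX
    have k1 : Alpha (qSwap z x xs X) (qSwap z x' xs X') :=
      key X hdX xs x x' X' hgX hgX' (AlphaAbs.qAbs hy hfy hfy' hsw) z
        (by simp [hzx, hzx']) (hzfr xs).1 (hzfr xs).2
    have k2 : Alpha (qSwap z x' xs X') (qSwap z x'' xs X'') :=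
      key X' hdX' xs x' x'' X'' hgX' hgX'' (AlphaAbs.qAbs hy' hf'y hf'y' hsw') z
        (by simp [hzx', hzx'']) (hzfr xs).2 (hfz'' xs)
    have t : Alpha (qSwap z x xs X) (qSwap z x'' xs X'') :=
      trans_tm _ (by rw [(qdepth_qSwap z x xs).1 X]; exact hdX) _ _
        ((qGood_qSwap z x xs).1 X hgX) ((qGood_qSwap z x' xs).1 X' hgX')
        ((qGood_qSwap z x'' xs).1 X'' hgX'') k1 k2
    exact AlphaAbs.qAbs (y := z) (by simp [hzx, hzx'']) (hzfr xs).1 (hfz'' xs) t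
  exact ⟨trans_tm, key, trans_abs⟩

end Aux5

/-- the forall-fresh variant of alpha-equivalence coincides with
alpha-equivalence on good quasiterms and good quasiabstractions. -/
theorem alpha'_iff_alpha (hinf : Cardinal.aleph0 ≤ Cardinal.mk var)
    (hreg : (Cardinal.mk var).IsRegular) :
    (∀ X Y : QTerm var varsort index bindex opsym, QGood X → QGood Y → (Alpha' X Y ↔ Alpha X Y)) ∧
    (∀ A B : QAbs var varsort index bindex opsym, QGoodAbs A → QGoodAbs B → (AlphaAbs' A B ↔ AlphaAbs A B)) := by
  suffices h : ∀ n : Ordinal.{u},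
      (∀ X Y : QTerm var varsort index bindex opsym, qdepth X < n → QGood X → QGood Y →
        (Alpha' X Y ↔ Alpha X Y)) ∧
      (∀ A B : QAbs var varsort index bindex opsym, qdepthAbs A < n → QGoodAbs A → QGoodAbs B →
        (AlphaAbs' A B ↔ AlphaAbs A B)) by
    constructor
    · intro X Y hX hY
      exact (h (qdepth X + 1)).1 X Y
        (by rw [Ordinal.add_one_eq_succ]; exact Order.lt_succ _) hX hY
    · intro A B hA hB
      exact (h (qdepthAbs A + 1)).2 A B
        (by rw [Ordinal.add_one_eq_succ]; exact Order.lt_succ _) hA hB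
  intro n
  induction n using Ordinal.induction with
  | h n IH =>
  constructor
  · intro X Y hd hgX hgY
    constructor
    · intro h
      rcases h with _ | @⟨d, inp, binp, inp', binp', hn1, hc1, hn3, hc3⟩
      · exact Alpha.qVar
      rcases hgX with _ | ⟨hg1, hg2, _, _⟩
      rcases hgY with _ | ⟨hg1', hg2', _, _⟩
      refine Alpha.qOp hn1 ?_ hn3 ?_
      · intro i X1 Y1 h1 h2
        exact ((IH _ hd).1 X1 Y1 (qdepth_lt_inp h1) (hg1 _ _ h1) (hg1' _ _ h2)).1
          (hc1 i _ _ h1 h2)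
      · intro j A1 B1 h1 h2
        exact ((IH _ hd).2 A1 B1 (qdepthAbs_lt_binp h1) (hg2 _ _ h1) (hg2' _ _ h2)).1
          (hc3 j _ _ h1 h2)
    · intro h
      rcases h with _ | @⟨d, inp, binp, inp', binp', hn1, hc1, hn3, hc3⟩
      · exact Alpha'.qVar
      rcases hgX with _ | ⟨hg1, hg2, _, _⟩
      rcases hgY with _ | ⟨hg1', hg2', _, _⟩
      refine Alpha'.qOp hn1 ?_ hn3 ?_
      · intro i X1 Y1 h1 h2
        exact ((IH _ hd).1 X1 Y1 (qdepth_lt_inp h1) (hg1 _ _ h1) (hg1' _ _ h2)).2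
          (hc1 i _ _ h1 h2)
      · intro j A1 B1 h1 h2
        exact ((IH _ hd).2 A1 B1 (qdepthAbs_lt_binp h1) (hg2 _ _ h1) (hg2' _ _ h2)).2
          (hc3 j _ _ h1 h2)
  · intro A B hd hgA hgB
    constructor
    · intro h
      rcases h with @⟨xs, x, x', X, X', hall⟩
      rcases hgA with ⟨hgX⟩
      rcases hgB with ⟨hgX'⟩
      obtain ⟨z, hzav, hzfr⟩ := exists_fresh_var hinf hreg hgX hgX'
        ({x, x'} : Set var) (finite_small hinf _ (Set.toFinite _))
      have hdz : qdepth (qSwap z x xs X) < n := by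
        rw [(qdepth_qSwap z x xs).1 X]
        exact lt_trans qdepth_lt_qAbs hd
      refine AlphaAbs.qAbs (y := z) hzav (hzfr xs).1 (hzfr xs).2 ?_
      exact ((IH _ hd).1 _ _ (by rw [(qdepth_qSwap z x xs).1 X]; exact qdepth_lt_qAbs)
        ((qGood_qSwap z x xs).1 X hgX) ((qGood_qSwap z x' xs).1 X' hgX')).1
        (hall z hzav (hzfr xs).1 (hzfr xs).2)
    · intro h
      rcases h with @⟨xs, x, x', X, X', y, hy, hfy, hfy', hsw⟩
      rcases hgA with ⟨hgX⟩
      rcases hgB with ⟨hgX'⟩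
      refine AlphaAbs'.qAbs ?_
      intro z hz hfz hfz'
      have k := (alpha_trans_key hinf hreg (qdepth X + 1)).2.1 X
        (by rw [Ordinal.add_one_eq_succ]; exact Order.lt_succ _) xs x x' X' hgX hgX'
        (AlphaAbs.qAbs hy hfy hfy' hsw) z hz hfz hfz'
      exact ((IH _ hd).1 _ _ (by rw [(qdepth_qSwap z x xs).1 X]; exact qdepth_lt_qAbs)
        ((qGood_qSwap z x xs).1 X hgX) ((qGood_qSwap z x' xs).1 X' hgX')).2 k

end Binding
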